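/- A compact Hausdorff topological monoid is profinite (i.e., an inverse limit of finite discrete monoids) if and only if its topology is zero-dimensional. -/

import Mathlib

open TopologicalSpace

private lemma cont_bot_of_fibers {S T : Type*} [TopologicalSpace S] (g : S → T)
    (h : ∀ z, IsOpen (g ⁻¹' {z})) : @Continuous S T _ ⊥ g := by
  letI : TopologicalSpace T := ⊥
  haveI : DiscreteTopology T := ⟨rfl⟩
  exact continuous_discrete_rng.mpr h

/-- A compact Hausdorff topological monoid is profinite (residually finite as a
topological monoid, equivalently an inverse limit of finite discrete monoids)
iff its topology is zero-dimensional. -/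
theorem profinite_monoid_iff_zeroDimensional {S : Type*} [Monoid S] [TopologicalSpace S]
    [CompactSpace S] [T2Space S] [ContinuousMul S] :
    (∀ x y : S, x ≠ y → ∃ (T : Type) (_ : Monoid T) (_ : Fintype T) (φ : S →* T),
        @Continuous S T _ ⊥ φ ∧ Function.Surjective φ ∧ φ x ≠ φ y) ↔
      TopologicalSpace.IsTopologicalBasis {s : Set S | IsClopen s} := by
  constructor
  · intro h
    have : TotallySeparatedSpace S := by
      constructor
      intro x _ y _ hxy
      obtain ⟨T, _, _, φ, hφ, -, hne⟩ := h x y hxy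
      letI : TopologicalSpace T := ⊥
      haveI : DiscreteTopology T := ⟨rfl⟩
      refine ⟨φ ⁻¹' {φ x}, (φ ⁻¹' {φ x})ᶜ, hφ.isOpen_preimage _ (isOpen_discrete _),
        (hφ.isOpen_preimage _ (isClosed_discrete _).isOpen_compl),
        rfl, fun hy => hne (hy.symm), ?_, ?_⟩
      · intro z _; exact (em _).imp id id
      · exact disjoint_compl_right
    exact loc_compact_Haus_tot_disc_of_zero_dim
  · intro hbasis x y hxy
    -- Find a clopen set U with x ∈ U and y ∉ U.
    obtain ⟨U, hU, hxU, hUy⟩ :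
        ∃ U : Set S, IsClopen U ∧ x ∈ U ∧ y ∉ U := by
      obtain ⟨U, hU, hxU, hsub⟩ := hbasis.exists_subset_of_mem_open
        (show x ∈ ({y}ᶜ : Set S) from hxy) (isOpen_compl_singleton)
      exact ⟨U, hU, hxU, fun hy => hsub hy rfl⟩
    -- The syntactic congruence of U.
    set c : Con S :=
      { r := fun s t => ∀ a b : S, a * s * b ∈ U ↔ a * t * b ∈ U
        iseqv := ⟨fun _ _ _ => Iff.rfl, fun h a b => (h a b).symm,
          fun h1 h2 a b => (h1 a b).trans (h2 a b)⟩
        mul' := by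
          intro s t s' t' h1 h2 a b
          calc a * (s * s') * b ∈ U ↔ (a * s) * s' * b ∈ U := by rw [mul_assoc a s s']
            _ ↔ (a * s) * t' * b ∈ U := h2 (a * s) b
            _ ↔ a * s * (t' * b) ∈ U := by rw [mul_assoc]
            _ ↔ a * t * (t' * b) ∈ U := h1 a (t' * b)
            _ ↔ a * (t * t') * b ∈ U := by rw [← mul_assoc, mul_assoc a t t'] } with hc
    -- Each congruence class is a neighborhood of each of its points.
    have key : ∀ s : S, ∃ V : Set S, IsOpen V ∧ s ∈ V ∧ ∀ t ∈ V, c s t := by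
      intro s
      set C : Set ((S × S) × S) := {p | p.1.1 * p.2 * p.1.2 ∈ U} with hC
      have hcont : Continuous fun p : (S × S) × S => p.1.1 * p.2 * p.1.2 := by fun_prop
      have hCclopen : IsClopen C := ⟨hU.1.preimage hcont, hU.2.preimage hcont⟩
      set K : Set (S × S) := {ab | ab.1 * s * ab.2 ∈ U} with hK
      have hgcont : Continuous fun ab : S × S => ab.1 * s * ab.2 := by fun_prop
      have hKc : IsCompact K := ((hU.1.preimage hgcont)).isCompact
      have hKcc : IsCompact Kᶜ := ((hU.2.preimage hgcont).isClosed_compl).isCompact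
      have h1 : K ×ˢ ({s} : Set S) ⊆ C := by
        rintro ⟨ab, t⟩ ⟨hab, ht⟩
        simp only [Set.mem_singleton_iff] at ht
        subst ht; exact hab
      have h2 : Kᶜ ×ˢ ({s} : Set S) ⊆ Cᶜ := by
        rintro ⟨ab, t⟩ ⟨hab, ht⟩
        simp only [Set.mem_singleton_iff] at ht
        subst ht; exact hab
      obtain ⟨u, v, hu, hv, hKu, hsv, huv⟩ :=
        generalized_tube_lemma hKc isCompact_singleton hCclopen.2 h1
      obtain ⟨u', v', hu', hv', hKu', hsv', huv'⟩ :=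
        generalized_tube_lemma hKcc isCompact_singleton hCclopen.1.isOpen_compl h2
      refine ⟨v ∩ v', hv.inter hv', ⟨hsv rfl, hsv' rfl⟩, ?_⟩
      intro t ht a b
      constructor
      · intro hs
        have hm : ((a, b), t) ∈ u ×ˢ v :=
          Set.mem_prod.mpr ⟨hKu (show (a, b) ∈ K from hs), ht.1⟩
        exact huv hm
      · intro htU
        by_contra hs
        have hm : ((a, b), t) ∈ u' ×ˢ v' :=
          Set.mem_prod.mpr ⟨hKu' (show (a, b) ∈ Kᶜ from hs), ht.2⟩
        exact huv' hm htU
    -- Each class is open.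
    have classOpen : ∀ s : S, IsOpen {t | c s t} := by
      intro s
      rw [isOpen_iff_forall_mem_open]
      intro t ht
      obtain ⟨V, hV, htV, hVc⟩ := key t
      exact ⟨V, fun u hu => c.trans ht (hVc u hu), hV, htV⟩
    -- Fibers of the quotient map are open.
    have fiberOpen : ∀ z : c.Quotient, IsOpen (c.mk' ⁻¹' {z}) := by
      intro z
      obtain ⟨s, rfl⟩ := Con.mk'_surjective z
      have : (c.mk' ⁻¹' {c.mk' s}) = {t | c s t} := by
        ext t
        simp only [Set.mem_preimage, Set.mem_singleton_iff, Set.mem_setOf_eq, Con.coe_mk']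
        rw [show (Con.toQuotient t = Con.toQuotient s) ↔ ((t : c.Quotient) = s) from Iff.rfl, Con.eq]
        exact ⟨fun h => c.symm h, fun h => c.symm h⟩
      rw [this]
      exact classOpen s
    -- The quotient is finite.
    haveI : Finite c.Quotient := by
      have hcover : (Set.univ : Set S) ⊆ ⋃ z : c.Quotient, c.mk' ⁻¹' {z} := by
        intro s _
        exact Set.mem_iUnion.mpr ⟨c.mk' s, rfl⟩
      obtain ⟨t, ht⟩ := isCompact_univ.elim_finite_subcover _ fiberOpen hcover
      have : (Set.univ : Set c.Quotient) ⊆ ↑t := by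
        intro z _
        obtain ⟨s, rfl⟩ := Con.mk'_surjective z
        obtain ⟨z', hz't, hs⟩ := Set.mem_iUnion₂.mp (ht (Set.mem_univ s))
        rw [Set.mem_preimage, Set.mem_singleton_iff] at hs
        rwa [hs]
      exact Set.finite_univ_iff.mp (t.finite_toSet.subset this)
    haveI : Fintype c.Quotient := Fintype.ofFinite _
    -- Transfer to Type 0 via Shrink.
    set T : Type := Shrink.{0} c.Quotient with hT
    haveI : Finite T := Finite.of_equiv _ (equivShrink.{0} c.Quotient)
    set ψ : c.Quotient →* T := (Shrink.mulEquiv.{0, u_1} (α := c.Quotient)).symm.toMonoidHom with hψ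
    have hψinj : Function.Injective ψ := (Shrink.mulEquiv.{0, u_1} (α := c.Quotient)).symm.injective
    have hψsurj : Function.Surjective ψ := (Shrink.mulEquiv.{0, u_1} (α := c.Quotient)).symm.surjective
    refine ⟨T, inferInstance, Fintype.ofFinite T, ψ.comp c.mk', ?_, ?_, ?_⟩
    · apply cont_bot_of_fibers
      intro z
      obtain ⟨w, rfl⟩ := hψsurj z
      have : (⇑(ψ.comp c.mk') ⁻¹' {ψ w}) = c.mk' ⁻¹' {w} := by
        ext s
        simp only [Set.mem_preimage, Set.mem_singleton_iff, MonoidHom.comp_apply]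
        exact ⟨fun h => hψinj h, fun h => congrArg ψ h⟩
      rw [this]
      exact fiberOpen _
    · exact hψsurj.comp (Con.mk'_surjective)
    · intro hEq
      have hmk : c.mk' x = c.mk' y := hψinj hEq
      have hcxy : c x y := by
        have := (Con.eq c (a := x) (b := y)).mp hmk
        exact this
      have h11 := hcxy 1 1
      simp only [one_mul, mul_one] at h11
      exact hUy (h11.mp hxU)
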